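/- Let d ≥ 2, r > 0, 0 ≤ ε_tr < r/2, and let D = {(x_i, y_i)}_{i=1}^n ⊂ ℝ^d × {−1, +1} satisfy (x_i)_1 = y_i·r/2, with induced dataset D̃ (first coordinate removed) linearly separable with normalized max-ℓ2-margin solution θ̃ and margin γ̃ > 0. Then the ε_tr-robust max-ℓ2-margin solution of D with respect to the signal-directed perturbation sets S_{ε_tr} is θ̂^{ε_tr} = (1/√((r − 2ε_tr)² + 4γ̃²)) · (r − 2ε_tr, 2γ̃·θ̃). -/

import Mathlib

open MeasureTheory ProbabilityTheory Real Set
open scoped ENNReal BigOperators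

noncomputable section

/-- Euclidean dot product on `Fin d → ℝ`. -/
def dot {d : ℕ} (u v : Fin d → ℝ) : ℝ := ∑ j, u j * v j

/-- Euclidean (`ℓ2`) norm on `Fin d → ℝ`. -/
def norm2 {d : ℕ} (u : Fin d → ℝ) : ℝ := Real.sqrt (∑ j, (u j) ^ 2)

/-- The (minimum) margin of the linear classifier `θ` on the dataset `{(x i, y i)}`. -/
def margin {d n : ℕ} (x : Fin n → Fin d → ℝ) (y : Fin n → ℝ) (θ : Fin d → ℝ) : ℝ :=
  ⨅ i, y i * dot θ (x i)

/-- The worst-case (robust) margin of `θ` on the dataset, with respect to the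
signal-directed perturbation sets `S_ε(x) = {x + β • e₁ : |β| ≤ ε}`. -/
def robustMargin {m n : ℕ} (ε : ℝ) (x : Fin n → Fin (m + 1) → ℝ) (y : Fin n → ℝ)
    (θ : Fin (m + 1) → ℝ) : ℝ :=
  ⨅ i, ⨅ β : {b : ℝ // |b| ≤ ε}, y i * dot θ (x i + β.1 • (Pi.single 0 1 : Fin (m + 1) → ℝ))

lemma exists_eq_min {ι : Type*} [Finite ι] [Nonempty ι] (f : ι → ℝ) :
    ∃ i, f i = ⨅ j, f j := by
  obtain ⟨i, hi⟩ := Finite.exists_min f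
  exact ⟨i, le_antisymm (le_ciInf hi) (ciInf_le (Finite.bddBelow_range f) i)⟩

lemma ciInf_add_const {ι : Type*} [Finite ι] [Nonempty ι] (f : ι → ℝ) (c : ℝ) :
    (⨅ i, (f i + c)) = (⨅ i, f i) + c := by
  obtain ⟨i, hi⟩ := exists_eq_min f
  refine le_antisymm ((ciInf_le (Finite.bddBelow_range _) i).trans (by rw [hi])) ?_
  exact le_ciInf fun j => by have h := ciInf_le (Finite.bddBelow_range f) j; linarith

lemma ciInf_const_mul {ι : Type*} [Finite ι] [Nonempty ι] (f : ι → ℝ) {c : ℝ} (hc : 0 ≤ c) :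
    (⨅ i, c * f i) = c * ⨅ i, f i := by
  obtain ⟨i, hi⟩ := exists_eq_min f
  refine le_antisymm ((ciInf_le (Finite.bddBelow_range _) i).trans (by rw [hi])) ?_
  exact le_ciInf fun j =>
    mul_le_mul_of_nonneg_left (hi ▸ ciInf_le (Finite.bddBelow_range f) j) hc

lemma ciInf_superadd {ι : Type*} [Finite ι] [Nonempty ι] (f g : ι → ℝ) :
    (⨅ i, f i) + (⨅ i, g i) ≤ ⨅ i, (f i + g i) :=
  le_ciInf fun i => add_le_add (ciInf_le (Finite.bddBelow_range f) i)
    (ciInf_le (Finite.bddBelow_range g) i)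

lemma inf_beta {ε : ℝ} (hε : 0 ≤ ε) (A c : ℝ) :
    (⨅ β : {b : ℝ // |b| ≤ ε}, (A + β.1 * c)) = A - ε * |c| := by
  haveI : Nonempty {b : ℝ // |b| ≤ ε} := ⟨⟨0, by simpa using hε⟩⟩
  have hbdd : BddBelow (Set.range fun β : {b : ℝ // |b| ≤ ε} => A + β.1 * c) := by
    refine ⟨A - ε * |c|, fun z hz => ?_⟩
    obtain ⟨β, rfl⟩ := hz
    show A - ε * |c| ≤ A + β.1 * c
    have h1 : -(|β.1| * |c|) ≤ β.1 * c := by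
      rw [← abs_mul]; exact neg_abs_le _
    have h2 : |β.1| * |c| ≤ ε * |c| := mul_le_mul_of_nonneg_right β.2 (abs_nonneg c)
    linarith
  refine le_antisymm ?_ (le_ciInf fun β => ?_)
  · rcases le_or_gt 0 c with h | h
    · have h3 : (⨅ β : {b : ℝ // |b| ≤ ε}, (A + β.1 * c)) ≤ A + (-ε) * c :=
        ciInf_le hbdd ⟨-ε, by rw [abs_neg, abs_of_nonneg hε]⟩
      rw [abs_of_nonneg h]; linarith
    · have h3 : (⨅ β : {b : ℝ // |b| ≤ ε}, (A + β.1 * c)) ≤ A + ε * c :=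
        ciInf_le hbdd ⟨ε, by rw [abs_of_nonneg hε]⟩
      rw [abs_of_neg h]; linarith
  · have h1 : -(|β.1| * |c|) ≤ β.1 * c := by rw [← abs_mul]; exact neg_abs_le _
    have h2 : |β.1| * |c| ≤ ε * |c| := mul_le_mul_of_nonneg_right β.2 (abs_nonneg c)
    linarith

-- dot lemmas
lemma dot_add_right {d : ℕ} (u v w : Fin d → ℝ) : dot u (v + w) = dot u v + dot u w := by
  simp [dot, mul_add, Finset.sum_add_distrib]

lemma dot_add_left {d : ℕ} (u v w : Fin d → ℝ) :
    dot (fun j => u j + v j) w = dot u w + dot v w := by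
  simp [dot, add_mul, Finset.sum_add_distrib]

lemma dot_smul_left {d : ℕ} (c : ℝ) (u v : Fin d → ℝ) : dot (c • u) v = c * dot u v := by
  simp [dot, Finset.mul_sum, mul_assoc]

lemma dot_single {m : ℕ} (θ : Fin (m+1) → ℝ) (β : ℝ) :
    dot θ (β • (Pi.single 0 1 : Fin (m+1) → ℝ)) = β * θ 0 := by
  simp [dot, Pi.single_apply, Finset.mul_sum, mul_comm]

lemma dot_split {m : ℕ} (θ v : Fin (m+1) → ℝ) :
    dot θ v = θ 0 * v 0 + dot (Fin.tail θ) (Fin.tail v) := by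
  simp [dot, Fin.sum_univ_succ, Fin.tail]

-- norm2 lemmas
lemma norm2_nonneg {d : ℕ} (u : Fin d → ℝ) : 0 ≤ norm2 u := Real.sqrt_nonneg _

lemma sq_norm2 {d : ℕ} (u : Fin d → ℝ) : (norm2 u) ^ 2 = ∑ j, (u j) ^ 2 :=
  Real.sq_sqrt (Finset.sum_nonneg fun j _ => sq_nonneg _)

lemma norm2_smul {d : ℕ} (c : ℝ) (u : Fin d → ℝ) : norm2 (c • u) = |c| * norm2 u := by
  simp only [norm2, Pi.smul_apply, smul_eq_mul, mul_pow]
  rw [← Finset.mul_sum, Real.sqrt_mul (sq_nonneg c), Real.sqrt_sq_eq_abs]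

lemma norm2_eq_zero {d : ℕ} {u : Fin d → ℝ} (h : norm2 u = 0) : u = 0 := by
  have hs : ∑ j, (u j) ^ 2 = 0 := by
    have := sq_norm2 u; rw [h] at this; simpa using this.symm
  funext j
  have := (Finset.sum_eq_zero_iff_of_nonneg (fun j _ => sq_nonneg (u j))).mp hs j (Finset.mem_univ j)
  exact pow_eq_zero_iff (by norm_num) |>.mp this


lemma margin_smul {d n : ℕ} [NeZero n] (x : Fin n → Fin d → ℝ) (y : Fin n → ℝ)
    {c : ℝ} (hc : 0 ≤ c) (u : Fin d → ℝ) :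
    margin x y (c • u) = c * margin x y u := by
  unfold margin
  rw [← ciInf_const_mul _ hc]
  congr 1; funext i; rw [dot_smul_left]; ring

lemma margin_superadd {d n : ℕ} [NeZero n] (x : Fin n → Fin d → ℝ) (y : Fin n → ℝ)
    (u v : Fin d → ℝ) :
    margin x y u + margin x y v ≤ margin x y (fun j => u j + v j) := by
  unfold margin
  refine le_trans (ciInf_superadd _ _) (le_of_eq ?_)
  congr 1; funext i; rw [dot_add_left]; ring

/-- Decomposition of the robust margin. -/
lemma robustMargin_eq {m n : ℕ} [NeZero n] {ε r : ℝ} (hε : 0 ≤ ε)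
    (x : Fin n → Fin (m + 1) → ℝ) (y : Fin n → ℝ)
    (hy : ∀ i, y i = 1 ∨ y i = -1)
    (hx1 : ∀ i, x i 0 = y i * (r / 2))
    (θ : Fin (m + 1) → ℝ) :
    robustMargin ε x y θ
      = θ 0 * (r / 2) - ε * |θ 0| + margin (fun i => Fin.tail (x i)) y (Fin.tail θ) := by
  unfold robustMargin
  have hterm : ∀ i, (⨅ β : {b : ℝ // |b| ≤ ε},
      y i * dot θ (x i + β.1 • (Pi.single 0 1 : Fin (m + 1) → ℝ)))
      = y i * dot (Fin.tail θ) (Fin.tail (x i)) + (θ 0 * (r / 2) - ε * |θ 0|) := by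
    intro i
    have hy2 : y i * y i = 1 := by rcases hy i with h | h <;> rw [h] <;> norm_num
    have hya : |y i| = 1 := by rcases hy i with h | h <;> rw [h] <;> norm_num
    have key : ∀ β : {b : ℝ // |b| ≤ ε},
        y i * dot θ (x i + β.1 • (Pi.single 0 1 : Fin (m + 1) → ℝ))
        = (θ 0 * (r / 2) + y i * dot (Fin.tail θ) (Fin.tail (x i))) + β.1 * (y i * θ 0) := by
      intro β
      rw [dot_add_right, dot_single, dot_split, hx1 i]
      linear_combination (θ 0 * (r / 2)) * hy2
    calc (⨅ β : {b : ℝ // |b| ≤ ε},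
        y i * dot θ (x i + β.1 • (Pi.single 0 1 : Fin (m + 1) → ℝ)))
        = ⨅ β : {b : ℝ // |b| ≤ ε},
            ((θ 0 * (r / 2) + y i * dot (Fin.tail θ) (Fin.tail (x i))) + β.1 * (y i * θ 0)) := by
          congr 1; funext β; exact key β
      _ = (θ 0 * (r / 2) + y i * dot (Fin.tail θ) (Fin.tail (x i))) - ε * |y i * θ 0| :=
          inf_beta hε _ _
      _ = y i * dot (Fin.tail θ) (Fin.tail (x i)) + (θ 0 * (r / 2) - ε * |θ 0|) := by
          rw [abs_mul, hya]; ring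
  calc (⨅ i, ⨅ β : {b : ℝ // |b| ≤ ε},
      y i * dot θ (x i + β.1 • (Pi.single 0 1 : Fin (m + 1) → ℝ)))
      = ⨅ i, (y i * dot (Fin.tail θ) (Fin.tail (x i)) + (θ 0 * (r / 2) - ε * |θ 0|)) := by
        congr 1; funext i; exact hterm i
    _ = margin (fun i => Fin.tail (x i)) y (Fin.tail θ) + (θ 0 * (r / 2) - ε * |θ 0|) :=
        ciInf_add_const _ _
    _ = _ := by ring


lemma margin_zero {d n : ℕ} [NeZero n] (x : Fin n → Fin d → ℝ) (y : Fin n → ℝ) :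
    margin x y 0 = 0 := by
  unfold margin
  have : ∀ i : Fin n, y i * dot (0 : Fin d → ℝ) (x i) = 0 := by
    intro i; simp [dot]
  simp only [this, ciInf_const]

lemma sum_sq_split {m : ℕ} (θ : Fin (m+1) → ℝ) :
    ∑ j, (θ j)^2 = (θ 0)^2 + ∑ j, (Fin.tail θ j)^2 := by
  rw [Fin.sum_univ_succ]; rfl


set_option maxHeartbeats 2000000 in
/-- Under the hypotheses of Statement 0 and for `0 ≤ ε_tr < r/2`, the
`ε_tr`-robust max-`ℓ2`-margin solution of the dataset with respect to the signal-directed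
perturbation sets is `θ̂^{ε_tr} = (1/√((r − 2ε_tr)² + 4γ̃²)) • (r − 2ε_tr, 2γ̃ θ̃)`: it has unit
norm, maximizes the robust margin over the unit ball, and is the unique unit-norm maximizer. -/
theorem robust_max_margin_closed_form
    {m n : ℕ} (hm : 1 ≤ m) (hn : 0 < n) (r εtr : ℝ) (hr : 0 < r)
    (hεtr : 0 ≤ εtr) (hεtr2 : εtr < r / 2)
    (x : Fin n → Fin (m + 1) → ℝ) (y : Fin n → ℝ)
    (hy : ∀ i, y i = 1 ∨ y i = -1)
    (hx1 : ∀ i, x i 0 = y i * (r / 2))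
    (θt : Fin m → ℝ) (γt : ℝ)
    (hθt_norm : norm2 θt = 1)
    (hγt : γt = margin (fun i => Fin.tail (x i)) y θt)
    (hγt_pos : 0 < γt)
    (hθt_max : ∀ θ : Fin m → ℝ, norm2 θ ≤ 1 →
      margin (fun i => Fin.tail (x i)) y θ ≤ γt) :
    ∀ θhat : Fin (m + 1) → ℝ,
      θhat = (Real.sqrt ((r - 2 * εtr) ^ 2 + 4 * γt ^ 2))⁻¹ •
        (Fin.cons (r - 2 * εtr) ((2 * γt) • θt) : Fin (m + 1) → ℝ) →
      norm2 θhat = 1 ∧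
      (∀ θ : Fin (m + 1) → ℝ, norm2 θ ≤ 1 →
        robustMargin εtr x y θ ≤ robustMargin εtr x y θhat) ∧
      (∀ θ : Fin (m + 1) → ℝ, norm2 θ = 1 →
        (∀ θ' : Fin (m + 1) → ℝ, norm2 θ' ≤ 1 →
          robustMargin εtr x y θ' ≤ robustMargin εtr x y θ) →
        θ = θhat) := by
  haveI : NeZero n := ⟨hn.ne'⟩
  intro θhat hθhat
  set p : ℝ := r / 2 - εtr with hp
  have hppos : 0 < p := by simp only [hp]; linarith
  set M : ℝ := Real.sqrt (p ^ 2 + γt ^ 2) with hMdef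
  have hMpos : 0 < M := Real.sqrt_pos.mpr (by positivity)
  have hM2 : M ^ 2 = p ^ 2 + γt ^ 2 := Real.sq_sqrt (by positivity)
  set N : ℝ := Real.sqrt ((r - 2 * εtr) ^ 2 + 4 * γt ^ 2) with hNdef
  have hNM : N = 2 * M := by
    rw [hNdef, hMdef]
    rw [show (r - 2 * εtr) ^ 2 + 4 * γt ^ 2 = 2 ^ 2 * (p ^ 2 + γt ^ 2) by rw [hp]; ring]
    rw [Real.sqrt_mul (by norm_num), Real.sqrt_sq (by norm_num)]
  have hNpos : 0 < N := by rw [hNM]; positivity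
  clear_value p M N
  have hsum : ∑ j, (θt j) ^ 2 = 1 := by
    have := sq_norm2 θt; rw [hθt_norm] at this; simpa using this.symm
  -- margin bound
  have hmarg : ∀ u : Fin m → ℝ,
      margin (fun i => Fin.tail (x i)) y u ≤ norm2 u * γt := by
    intro u
    rcases eq_or_lt_of_le (norm2_nonneg u) with h0 | h0
    · rw [norm2_eq_zero h0.symm, margin_zero]
      exact mul_nonneg (norm2_nonneg _) hγt_pos.le
    · have hc : (0:ℝ) ≤ (norm2 u)⁻¹ := inv_nonneg.mpr h0.le
      have hnv : norm2 ((norm2 u)⁻¹ • u) = 1 := by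
        rw [norm2_smul, abs_of_nonneg hc, inv_mul_cancel₀ h0.ne']
      have := hθt_max _ (le_of_eq hnv)
      rw [margin_smul _ _ hc] at this
      calc margin (fun i => Fin.tail (x i)) y u
          = norm2 u * ((norm2 u)⁻¹ * margin (fun i => Fin.tail (x i)) y u) := by
            field_simp
        _ ≤ norm2 u * γt := mul_le_mul_of_nonneg_left this h0.le
  -- Cauchy-Schwarz in ℝ²
  have hCS : ∀ a b : ℝ, 0 ≤ b → a ^ 2 + b ^ 2 ≤ 1 → |a| * p + b * γt ≤ M := by
    intro a b hb hab
    have hX : 0 ≤ |a| * p + b * γt := by positivity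
    have hsq : (|a| * p + b * γt) ^ 2 ≤ M ^ 2 := by
      nlinarith [sq_nonneg (|a| * γt - b * p), sq_abs a,
        mul_nonneg (sub_nonneg.mpr hab) (by positivity : (0:ℝ) ≤ p ^ 2 + γt ^ 2)]
    nlinarith [hsq, hX, hMpos]
  -- components of θhat
  have hθhat0 : θhat 0 = N⁻¹ * (r - 2 * εtr) := by
    rw [hθhat]; simp
  have hθhat_tail : Fin.tail θhat = (N⁻¹ * (2 * γt)) • θt := by
    funext j
    rw [hθhat]
    simp [Fin.tail, Fin.cons_succ, mul_assoc]
  -- robust margin of θhat equals M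
  have hval : robustMargin εtr x y θhat = M := by
    rw [robustMargin_eq hεtr x y hy hx1, hθhat0, hθhat_tail,
      margin_smul _ _ (by positivity), ← hγt,
      abs_of_nonneg (by nlinarith [inv_nonneg.mpr hNpos.le] : (0:ℝ) ≤ N⁻¹ * (r - 2 * εtr))]
    rw [hNM, show r - 2 * εtr = 2 * p by rw [hp]; ring]
    have hM0 : M ≠ 0 := hMpos.ne'
    field_simp
    linear_combination (-2) * hM2 + (-2 * p) * hp
  -- norm of θhat
  have hnorm_cons : norm2 (Fin.cons (r - 2 * εtr) ((2 * γt) • θt) : Fin (m+1) → ℝ) = N := by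
    rw [norm2, hNdef]
    congr 1
    rw [sum_sq_split, Fin.cons_zero, Fin.tail_cons]
    have : ∑ j, (((2 * γt) • θt) j) ^ 2 = 4 * γt ^ 2 := by
      simp only [Pi.smul_apply, smul_eq_mul, mul_pow]
      rw [← Finset.mul_sum, hsum]; ring
    rw [this]
  have hnormhat : norm2 θhat = 1 := by
    rw [hθhat, norm2_smul, abs_of_nonneg (inv_nonneg.mpr hNpos.le), hnorm_cons,
      inv_mul_cancel₀ hNpos.ne']
  refine ⟨hnormhat, ?_, ?_⟩
  · -- maximality
    intro θ hθle
    rw [hval, robustMargin_eq hεtr x y hy hx1]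
    have hb : 0 ≤ norm2 (Fin.tail θ) := norm2_nonneg _
    have hab : (θ 0) ^ 2 + (norm2 (Fin.tail θ)) ^ 2 ≤ 1 := by
      have h1 : (norm2 θ) ^ 2 ≤ 1 := pow_le_one₀ (norm2_nonneg θ) hθle
      rw [sq_norm2, sum_sq_split] at h1
      rw [sq_norm2]
      exact h1
    have h2 := hmarg (Fin.tail θ)
    have h3 := hCS (θ 0) (norm2 (Fin.tail θ)) hb hab
    have h4 : θ 0 * (r / 2) - εtr * |θ 0| ≤ |θ 0| * p := by
      rcases le_or_gt 0 (θ 0) with hz | hz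
      · rw [abs_of_nonneg hz, hp]
        exact le_of_eq (by ring)
      · rw [abs_of_neg hz, hp]
        have h5 : θ 0 * r ≤ 0 := mul_nonpos_of_nonpos_of_nonneg hz.le hr.le
        linarith
    linarith
  · -- uniqueness
    intro θ hθ1 hmax
    have hge : M ≤ robustMargin εtr x y θ := by
      have := hmax θhat (le_of_eq hnormhat)
      rwa [hval] at this
    rw [robustMargin_eq hεtr x y hy hx1] at hge
    set a := θ 0 with ha_def
    set u := Fin.tail θ with hu_def
    set b := norm2 u with hb_def
    set μ := margin (fun i => Fin.tail (x i)) y u with hμ_def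
    clear_value a u b μ
    have hb : 0 ≤ b := by rw [hb_def]; exact norm2_nonneg u
    have hab : a ^ 2 + b ^ 2 = 1 := by
      have h1 : (norm2 θ) ^ 2 = 1 := by rw [hθ1]; norm_num
      rw [sq_norm2, sum_sq_split] at h1
      rw [hb_def, sq_norm2, ha_def, hu_def]
      exact h1
    have hmu : μ ≤ b * γt := by
      rw [hμ_def, hb_def]; exact hmarg u
    have h3 : |a| * p + b * γt ≤ M := hCS a b hb (le_of_eq hab)
    have h4 : a * (r / 2) - εtr * |a| ≤ |a| * p := by
      rcases le_or_gt 0 a with hz | hz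
      · rw [abs_of_nonneg hz, hp]
        exact le_of_eq (by ring)
      · rw [abs_of_neg hz, hp]
        have h5 : a * r ≤ 0 := mul_nonpos_of_nonpos_of_nonneg hz.le hr.le
        linarith
    -- equalities
    have e1 : |a| * p + b * γt = M := le_antisymm h3 (by linarith)
    have e2 : μ = b * γt := le_antisymm hmu (by linarith)
    have e3 : a * (r / 2) - εtr * |a| = |a| * p := le_antisymm h4 (by linarith)
    -- CS equality case
    have key : (|a| * γt - b * p) ^ 2
        = (a ^ 2 + b ^ 2) * (p ^ 2 + γt ^ 2) - (|a| * p + b * γt) ^ 2 := by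
      rw [← sq_abs a]; ring
    rw [hab, e1, ← hM2] at key
    have hprop : |a| * γt = b * p := by
      have : (|a| * γt - b * p) ^ 2 = 0 := by rw [key]; ring
      have := pow_eq_zero_iff (n := 2) (by norm_num) |>.mp this
      linarith
    have h5 : a ^ 2 * γt ^ 2 = b ^ 2 * p ^ 2 := by
      have := congrArg (· ^ 2) hprop
      simpa [mul_pow, sq_abs] using this
    have hbval : b = γt / M := by
      have hb2 : b ^ 2 * M ^ 2 = γt ^ 2 := by
        rw [hM2]
        linear_combination γt ^ 2 * hab - h5
      have hb2' : b ^ 2 = (γt / M) ^ 2 := by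
        rw [div_pow, eq_div_iff (by positivity : M ^ 2 ≠ 0)]
        exact hb2
      calc b = Real.sqrt (b ^ 2) := (Real.sqrt_sq hb).symm
        _ = Real.sqrt ((γt / M) ^ 2) := by rw [hb2']
        _ = γt / M := Real.sqrt_sq (by positivity)
    have ha0 : 0 ≤ a := by
      by_contra hneg
      push_neg at hneg
      rw [abs_of_neg hneg, hp] at e3
      have har : a * r = 0 := by linarith
      rcases mul_eq_zero.mp har with h | h
      · exact hneg.ne h
      · exact hr.ne' h
    have haval : a = p / M := by
      rw [abs_of_nonneg ha0, hbval] at hprop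
      have h11 : γt * (a * M) = γt * p := by
        field_simp [hMpos.ne'] at hprop
        linear_combination γt * hprop
      have h12 : a * M = p := mul_left_cancel₀ hγt_pos.ne' h11
      rw [eq_div_iff hMpos.ne']
      exact h12
    have hbpos : 0 < b := by rw [hbval]; positivity
    -- direction uniqueness
    set v : Fin m → ℝ := b⁻¹ • u with hv_def
    clear_value v
    have hnv : norm2 v = 1 := by
      rw [hv_def, norm2_smul, abs_of_nonneg (inv_nonneg.mpr hb), ← hb_def,
        inv_mul_cancel₀ hbpos.ne']
    have hsumv : ∑ j, (v j) ^ 2 = 1 := by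
      have := sq_norm2 v; rw [hnv] at this; simpa using this.symm
    have hmv : margin (fun i => Fin.tail (x i)) y v = γt := by
      rw [hv_def, margin_smul _ _ (inv_nonneg.mpr hb), ← hμ_def, e2,
        ← mul_assoc, inv_mul_cancel₀ hbpos.ne', one_mul]
    have hveq : v = θt := by
      by_contra hne
      set w : Fin m → ℝ := fun j => v j + θt j with hw_def
      clear_value w
      have hmw : 2 * γt ≤ margin (fun i => Fin.tail (x i)) y w := by
        have := margin_superadd (fun i => Fin.tail (x i)) y v θt
        rw [hmv, ← hγt, ← hw_def] at this
        calc 2 * γt = γt + γt := by ring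
          _ ≤ _ := this
      have hdotlt : dot v θt < 1 := by
        obtain ⟨j0, hj0⟩ : ∃ j, v j ≠ θt j := by
          by_contra hc
          push_neg at hc
          exact hne (funext hc)
        have hpos : 0 < ∑ j, (v j - θt j) ^ 2 := by
          refine Finset.sum_pos' (fun j _ => sq_nonneg _) ⟨j0, Finset.mem_univ j0, ?_⟩
          have := sub_ne_zero.mpr hj0
          positivity
        have hexp : ∑ j, (v j - θt j) ^ 2
            = (∑ j, (v j) ^ 2) + (∑ j, (θt j) ^ 2) - 2 * dot v θt := by
          rw [dot, Finset.mul_sum, ← Finset.sum_add_distrib, ← Finset.sum_sub_distrib]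
          exact Finset.sum_congr rfl fun j _ => by ring
        rw [hexp, hsumv, hsum] at hpos
        linarith
      have hw2 : ∑ j, (w j) ^ 2 < 4 := by
        have hexp : ∑ j, (w j) ^ 2
            = (∑ j, (v j) ^ 2) + (∑ j, (θt j) ^ 2) + 2 * dot v θt := by
          rw [hw_def, dot, Finset.mul_sum, ← Finset.sum_add_distrib, ← Finset.sum_add_distrib]
          exact Finset.sum_congr rfl fun j _ => by ring
        rw [hexp, hsumv, hsum]
        linarith
      have hwpos : 0 < norm2 w := by
        rcases eq_or_lt_of_le (norm2_nonneg w) with h0 | h0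
        · exfalso
          have : w = 0 := norm2_eq_zero h0.symm
          rw [this, margin_zero] at hmw
          linarith
        · exact h0
      have hwlt : norm2 w < 2 := by
        rw [norm2]
        rw [show (2:ℝ) = Real.sqrt 4 by
          rw [show (4:ℝ) = 2 ^ 2 by norm_num, Real.sqrt_sq (by norm_num)]]
        exact Real.sqrt_lt_sqrt (Finset.sum_nonneg fun j _ => sq_nonneg _) hw2
      have hnw' : norm2 ((norm2 w)⁻¹ • w) = 1 := by
        rw [norm2_smul, abs_of_nonneg (inv_nonneg.mpr hwpos.le), inv_mul_cancel₀ hwpos.ne']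
      have hmax' := hθt_max _ (le_of_eq hnw')
      rw [margin_smul _ _ (inv_nonneg.mpr hwpos.le)] at hmax'
      have hgt : γt < (norm2 w)⁻¹ * margin (fun i => Fin.tail (x i)) y w := by
        have h6 : (2:ℝ)⁻¹ < (norm2 w)⁻¹ := by
          exact inv_strictAnti₀ hwpos hwlt
        calc γt = 2⁻¹ * (2 * γt) := by ring
          _ < (norm2 w)⁻¹ * (2 * γt) := by
            apply mul_lt_mul_of_pos_right h6
            linarith
          _ ≤ (norm2 w)⁻¹ * margin (fun i => Fin.tail (x i)) y w := by
            apply mul_le_mul_of_nonneg_left hmw (inv_nonneg.mpr hwpos.le)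
      linarith
    have huval : ∀ j, u j = b * θt j := by
      intro j
      have : v j = θt j := by rw [hveq]
      rw [hv_def] at this
      simp only [Pi.smul_apply, smul_eq_mul] at this
      rw [inv_mul_eq_iff_eq_mul₀ hbpos.ne'] at this
      exact this
    funext j
    refine Fin.cases ?_ (fun k => ?_) j
    · rw [hθhat0, ← ha_def, haval, hNM, hp]
      field_simp
    · have h7 : θ k.succ = u k := (congrFun hu_def k).symm
      have h8 : θhat k.succ = (N⁻¹ * (2 * γt)) • θt k := by
        have := congrFun hθhat_tail k
        simpa [Fin.tail] using this
      rw [h7, h8, huval k, hbval, hNM]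
      simp only [smul_eq_mul]
      field_simp


end
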